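/- Let ŵ be any weight selection, let Q_E : Δ(S) × A → ℝ be bounded with Q_E = H_ŵ Q_E, and let Q_F : Δ(S) × A → ℝ be bounded with Q_F = H_FIB Q_F. Then for every belief b ∈ Δ(S) and every a ∈ A: Q_E(b,a) ≤ Q_F(b,a). In particular the entropy-based tighter informed bound is at least as tight as the fast informed bound. -/

import Mathlib

open Finset
open scoped Classical

set_option linter.unusedSectionVars false

/-- A belief (probability distribution) over a finite state space `S`. -/
structure Belief (S : Type*) [Fintype S] where
  val : S → ℝ
  nonneg : ∀ s, 0 ≤ val s
  sum_one : ∑ s, val s = 1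

/-- The convex combination `l • b₁ + (1-l) • b₂` of two beliefs. -/
noncomputable def Belief.mix {S : Type*} [Fintype S] (b₁ b₂ : Belief S) (l : ℝ)
    (h0 : 0 ≤ l) (h1 : l ≤ 1) : Belief S where
  val s := l * b₁.val s + (1 - l) * b₂.val s
  nonneg s := add_nonneg (mul_nonneg h0 (b₁.nonneg s))
    (mul_nonneg (by linarith) (b₂.nonneg s))
  sum_one := by
    rw [Finset.sum_add_distrib, ← Finset.mul_sum, ← Finset.mul_sum, b₁.sum_one, b₂.sum_one]
    ring

/-- `Q : Δ(S) × A → ℝ` is convex in the belief. -/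
def ConvexInBelief {S A : Type*} [Fintype S] (Q : Belief S → A → ℝ) : Prop :=
  ∀ (a : A) (b₁ b₂ : Belief S) (l : ℝ) (h0 : 0 ≤ l) (h1 : l ≤ 1),
    Q (Belief.mix b₁ b₂ l h0 h1) a ≤ l * Q b₁ a + (1 - l) * Q b₂ a

/-- A finite POMDP: transition function `T s a s' = T(s'|s,a)`, observation function
`Z a s' o = Ω(o|a,s')`, rewards `R`, discount `γ ∈ (0,1)`. -/
structure POMDP (S A O : Type*) [Fintype S] [Fintype A] [Fintype O] where
  T : S → A → S → ℝ
  T_nonneg : ∀ s a s', 0 ≤ T s a s'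
  T_sum_one : ∀ s a, ∑ s', T s a s' = 1
  Z : A → S → O → ℝ
  Z_nonneg : ∀ a s' o, 0 ≤ Z a s' o
  Z_sum_one : ∀ a s', ∑ o, Z a s' o = 1
  R : S → A → ℝ
  γ : ℝ
  γ_pos : 0 < γ
  γ_lt_one : γ < 1

namespace POMDP

variable {S A O : Type*} [Fintype S] [Fintype A] [Fintype O] [Nonempty S] [Nonempty A]
  [Nonempty O]
variable (M : POMDP S A O)

/-- `Pr(s',o|s,a)` -/
def prSO (s : S) (a : A) (s' : S) (o : O) : ℝ := M.Z a s' o * M.T s a s'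

lemma prSO_nonneg (s : S) (a : A) (s' : S) (o : O) : 0 ≤ M.prSO s a s' o :=
  mul_nonneg (M.Z_nonneg a s' o) (M.T_nonneg s a s')

/-- `Pr(o|s,a)` -/
def prO (s : S) (a : A) (o : O) : ℝ := ∑ s', M.prSO s a s' o

/-- `Pr(s',o|b,a)` -/
def bprSO (b : Belief S) (a : A) (s' : S) (o : O) : ℝ := ∑ s, b.val s * M.prSO s a s' o

lemma bprSO_nonneg (b : Belief S) (a : A) (s' : S) (o : O) : 0 ≤ M.bprSO b a s' o :=
  Finset.sum_nonneg fun s _ => mul_nonneg (b.nonneg s) (M.prSO_nonneg s a s' o)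

/-- `Pr(o|b,a)` -/
def bprO (b : Belief S) (a : A) (o : O) : ℝ := ∑ s', M.bprSO b a s' o

/-- The unit belief `δ_s`. -/
noncomputable def unit (s : S) : Belief S where
  val s' := if s' = s then 1 else 0
  nonneg s' := by by_cases h : s' = s <;> simp [h]
  sum_one := by simp

/-- The posterior belief `b_{b,a,o}`, defined when `Pr(o|b,a) > 0`. -/
noncomputable def post (b : Belief S) (a : A) (o : O) (h : 0 < M.bprO b a o) : Belief S where
  val s' := M.bprSO b a s' o / M.bprO b a o
  nonneg s' := div_nonneg (M.bprSO_nonneg b a s' o) h.le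
  sum_one := by
    rw [← Finset.sum_div]
    exact div_self (ne_of_gt h)

/-- The one-step belief `b_{s,a,o} = b_{δ_s,a,o}`, defined when `Pr(o|s,a) > 0`. -/
noncomputable def osb (s : S) (a : A) (o : O) (h : 0 < M.prO s a o) : Belief S where
  val s' := M.prSO s a s' o / M.prO s a o
  nonneg s' := div_nonneg (M.prSO_nonneg s a s' o) h.le
  sum_one := by
    unfold prO
    rw [← Finset.sum_div]
    exact div_self (ne_of_gt h)

/-- Expected reward `R(b,a)`. -/
noncomputable def expR (b : Belief S) (a : A) : ℝ := ∑ s, b.val s * M.R s a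

/-- The fast informed bound operator `H_FIB`. -/
noncomputable def HFIB (Q : Belief S → A → ℝ) (b : Belief S) (a : A) : ℝ :=
  M.expR b a + M.γ * ∑ o, Finset.univ.sup' Finset.univ_nonempty
    (fun a' => ∑ s', M.bprSO b a s' o * Q (unit s') a')

/-- The tighter informed bound operator `H_TIB`. -/
noncomputable def HTIB (Q : Belief S → A → ℝ) (b : Belief S) (a : A) : ℝ :=
  M.expR b a + M.γ * ∑ o, Finset.univ.sup' Finset.univ_nonempty
    (fun a' => ∑ s, if h : 0 < M.prO s a o then
      b.val s * M.prO s a o * Q (M.osb s a o h) a' else 0)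

/-- The optimal Bellman operator `H_POMDP`. -/
noncomputable def HPOMDP (Q : Belief S → A → ℝ) (b : Belief S) (a : A) : ℝ :=
  M.expR b a + M.γ * ∑ o, if h : 0 < M.bprO b a o then
    M.bprO b a o * Finset.univ.sup' Finset.univ_nonempty (fun a' => Q (M.post b a o h) a')
  else 0

/-- Index type for the family `B_SAO`: `none` indexes the initial belief `b₀`,
`some (s,a,o)` (with `Pr(o|s,a) > 0`) indexes the one-step belief `b_{s,a,o}`. -/
abbrev OSIdx : Type _ := Option {x : S × A × O // 0 < M.prO x.1 x.2.1 x.2.2}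

/-- The member of the family `B_SAO` (with initial belief `b₀`) at a given index. -/
noncomputable def member (b₀ : Belief S) : M.OSIdx → Belief S
  | none => b₀
  | some x => M.osb x.1.1 x.1.2.1 x.1.2.2 x.2

/-- `w` is a weight function for the belief `tgt` over the family `B_SAO`. -/
def IsWeight (b₀ : Belief S) (tgt : Belief S) (w : M.OSIdx → ℝ) : Prop :=
  (∀ i, 0 ≤ w i) ∧ ∀ s, ∑ i, w i * (M.member b₀ i).val s = tgt.val s

/-- The optimized tighter informed bound operator `H_OTIB`. -/
noncomputable def HOTIB (b₀ : Belief S) (Q : Belief S → A → ℝ) (b : Belief S) (a : A) : ℝ :=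
  M.expR b a + M.γ * ∑ o, if h : 0 < M.bprO b a o then
    Finset.univ.sup' Finset.univ_nonempty (fun a' =>
      M.bprO b a o * ⨅ w : {w : M.OSIdx → ℝ // M.IsWeight b₀ (M.post b a o h) w},
        ∑ i, (w : M.OSIdx → ℝ) i * Q (M.member b₀ i) a')
  else 0

/-- The operator `H_ŵ` induced by a weight selection `W`. -/
noncomputable def Hsel (b₀ : Belief S)
    (W : ∀ (b : Belief S) (a : A) (o : O), 0 < M.bprO b a o → (M.OSIdx → ℝ))
    (Q : Belief S → A → ℝ) (b : Belief S) (a : A) : ℝ :=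
  M.expR b a + M.γ * ∑ o, if h : 0 < M.bprO b a o then
    Finset.univ.sup' Finset.univ_nonempty (fun a' =>
      M.bprO b a o * ∑ i, W b a o h i * Q (M.member b₀ i) a')
  else 0

end POMDP

namespace POMDP

variable {S A O : Type*} [Fintype S] [Fintype A] [Fintype O] [Nonempty S] [Nonempty A]
  [Nonempty O]
variable (M : POMDP S A O)

lemma expR_unit (s : S) (a : A) : M.expR (unit s) a = M.R s a := by
  simp [expR, unit, ite_mul]

lemma bprSO_unit (s : S) (a : A) (s' : S) (o : O) :
    M.bprSO (unit s) a s' o = M.prSO s a s' o := by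
  simp [bprSO, unit, ite_mul]

lemma sum_bprO (b : Belief S) (a : A) : ∑ o, M.bprO b a o = 1 := by
  unfold bprO bprSO prSO
  rw [Finset.sum_comm]
  have h1 : ∀ s' : S, (∑ o, ∑ s, b.val s * (M.Z a s' o * M.T s a s'))
      = ∑ s, b.val s * M.T s a s' := by
    intro s'
    rw [Finset.sum_comm]
    refine Finset.sum_congr rfl fun s _ => ?_
    calc ∑ o, b.val s * (M.Z a s' o * M.T s a s')
        = (∑ o, M.Z a s' o) * (b.val s * M.T s a s') := by
          rw [Finset.sum_mul]; exact Finset.sum_congr rfl fun o _ => by ring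
      _ = b.val s * M.T s a s' := by rw [M.Z_sum_one, one_mul]
  calc ∑ s', ∑ o, ∑ s, b.val s * (M.Z a s' o * M.T s a s')
      = ∑ s', ∑ s, b.val s * M.T s a s' := Finset.sum_congr rfl fun s' _ => h1 s'
    _ = ∑ s, b.val s * ∑ s', M.T s a s' := by
        rw [Finset.sum_comm]
        exact Finset.sum_congr rfl fun s _ => (Finset.mul_sum _ _ _).symm
    _ = 1 := by simp only [M.T_sum_one, mul_one]; exact b.sum_one

lemma weight_sum_one {b₀ tgt : Belief S} {w : M.OSIdx → ℝ} (hw : M.IsWeight b₀ tgt w) :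
    ∑ i, w i = 1 := by
  have h : ∑ s, ∑ i, w i * (M.member b₀ i).val s = ∑ s, tgt.val s :=
    Finset.sum_congr rfl fun s _ => hw.2 s
  rw [tgt.sum_one, Finset.sum_comm] at h
  calc ∑ i, w i = ∑ i, w i * ∑ s, (M.member b₀ i).val s := by
        simp only [(M.member b₀ _).sum_one, mul_one]
    _ = ∑ i, ∑ s, w i * (M.member b₀ i).val s :=
        Finset.sum_congr rfl fun i _ => Finset.mul_sum _ _ _
    _ = 1 := h

/-- Key lemma: a fixed point of `H_FIB` is dominated by its linear extension from unit
beliefs. -/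
lemma QF_le_lin (QF : Belief S → A → ℝ) (hQF : ∀ b a, QF b a = M.HFIB QF b a)
    (b : Belief S) (a : A) :
    QF b a ≤ ∑ s, b.val s * QF (unit s) a := by
  have hunit : ∀ s, QF (unit s) a = M.R s a + M.γ * ∑ o,
      Finset.univ.sup' Finset.univ_nonempty
        (fun a' => ∑ s', M.prSO s a s' o * QF (unit s') a') := by
    intro s
    rw [hQF (unit s) a]
    simp only [HFIB, expR_unit, bprSO_unit]
  rw [hQF b a]
  unfold HFIB
  have hrhs : ∑ s, b.val s * QF (unit s) a = M.expR b a + M.γ * ∑ o, ∑ s,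
      b.val s * Finset.univ.sup' Finset.univ_nonempty
        (fun a' => ∑ s', M.prSO s a s' o * QF (unit s') a') := by
    calc ∑ s, b.val s * QF (unit s) a
        = ∑ s, (b.val s * M.R s a + M.γ * (b.val s * ∑ o,
            Finset.univ.sup' Finset.univ_nonempty
              (fun a' => ∑ s', M.prSO s a s' o * QF (unit s') a'))) := by
          refine Finset.sum_congr rfl fun s _ => ?_
          rw [hunit s]; ring
      _ = M.expR b a + M.γ * ∑ s, b.val s * ∑ o,
            Finset.univ.sup' Finset.univ_nonempty
              (fun a' => ∑ s', M.prSO s a s' o * QF (unit s') a') := by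
          rw [Finset.sum_add_distrib, ← Finset.mul_sum]; rfl
      _ = _ := by
          rw [Finset.sum_comm]
          congr 2
          exact Finset.sum_congr rfl fun s _ => Finset.mul_sum _ _ _
  rw [hrhs]
  refine (add_le_add_iff_left _).2 (mul_le_mul_of_nonneg_left (Finset.sum_le_sum fun o _ => ?_)
    M.γ_pos.le)
  refine Finset.sup'_le _ _ fun a' _ => ?_
  have key : ∑ s', M.bprSO b a s' o * QF (unit s') a'
      = ∑ s, b.val s * ∑ s', M.prSO s a s' o * QF (unit s') a' := by
    unfold bprSO
    calc ∑ s', (∑ s, b.val s * M.prSO s a s' o) * QF (unit s') a'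
        = ∑ s', ∑ s, b.val s * (M.prSO s a s' o * QF (unit s') a') := by
          refine Finset.sum_congr rfl fun s' _ => ?_
          rw [Finset.sum_mul]; exact Finset.sum_congr rfl fun s _ => by ring
      _ = ∑ s, ∑ s', b.val s * (M.prSO s a s' o * QF (unit s') a') := Finset.sum_comm
      _ = ∑ s, b.val s * ∑ s', M.prSO s a s' o * QF (unit s') a' :=
          Finset.sum_congr rfl fun s _ => (Finset.mul_sum _ _ _).symm
  rw [key]
  refine Finset.sum_le_sum fun s _ => ?_
  exact mul_le_mul_of_nonneg_left
    (Finset.le_sup' (fun a' => ∑ s', M.prSO s a s' o * QF (unit s') a')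
      (Finset.mem_univ a')) (b.nonneg s)

lemma bprSO_eq_zero {b : Belief S} {a : A} {o : O} (h : ¬ 0 < M.bprO b a o) (s' : S) :
    M.bprSO b a s' o = 0 := by
  push_neg at h
  have h0 : M.bprO b a o = 0 :=
    le_antisymm h (Finset.sum_nonneg fun s' _ => M.bprSO_nonneg b a s' o)
  exact (Finset.sum_eq_zero_iff_of_nonneg (fun s' _ => M.bprSO_nonneg b a s' o)).1 h0 s'
    (Finset.mem_univ s')

lemma Hsel_QF_le (b₀ : Belief S)
    (W : ∀ (b : Belief S) (a : A) (o : O), 0 < M.bprO b a o → (M.OSIdx → ℝ))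
    (hW : ∀ b a o (h : 0 < M.bprO b a o), M.IsWeight b₀ (M.post b a o h) (W b a o h))
    (QF : Belief S → A → ℝ) (hQF : ∀ b a, QF b a = M.HFIB QF b a) (b : Belief S) (a : A) :
    M.Hsel b₀ W QF b a ≤ QF b a := by
  conv_rhs => rw [hQF b a]
  unfold Hsel HFIB
  refine (add_le_add_iff_left _).2 (mul_le_mul_of_nonneg_left (Finset.sum_le_sum fun o _ => ?_)
    M.γ_pos.le)
  by_cases h : 0 < M.bprO b a o
  · rw [dif_pos h]
    refine Finset.sup'_le _ _ fun a' _ => ?_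
    refine le_trans ?_
      (Finset.le_sup' (fun a' => ∑ s', M.bprSO b a s' o * QF (unit s') a')
        (Finset.mem_univ a'))
    have h1 : ∑ i, W b a o h i * QF (M.member b₀ i) a'
        ≤ ∑ i, W b a o h i * ∑ s', (M.member b₀ i).val s' * QF (unit s') a' :=
      Finset.sum_le_sum fun i _ => mul_le_mul_of_nonneg_left
        (M.QF_le_lin QF hQF _ a') ((hW b a o h).1 i)
    have h2 : ∑ i, W b a o h i * ∑ s', (M.member b₀ i).val s' * QF (unit s') a'
        = ∑ s', (M.post b a o h).val s' * QF (unit s') a' := by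
      calc ∑ i, W b a o h i * ∑ s', (M.member b₀ i).val s' * QF (unit s') a'
          = ∑ i, ∑ s', W b a o h i * (M.member b₀ i).val s' * QF (unit s') a' := by
            refine Finset.sum_congr rfl fun i _ => ?_
            rw [Finset.mul_sum]; exact Finset.sum_congr rfl fun s' _ => by ring
        _ = ∑ s', ∑ i, W b a o h i * (M.member b₀ i).val s' * QF (unit s') a' :=
            Finset.sum_comm
        _ = ∑ s', (∑ i, W b a o h i * (M.member b₀ i).val s') * QF (unit s') a' :=
            Finset.sum_congr rfl fun s' _ => (Finset.sum_mul _ _ _).symm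
        _ = _ := Finset.sum_congr rfl fun s' _ => by rw [(hW b a o h).2 s']
    calc M.bprO b a o * ∑ i, W b a o h i * QF (M.member b₀ i) a'
        ≤ M.bprO b a o * ∑ s', (M.post b a o h).val s' * QF (unit s') a' :=
          mul_le_mul_of_nonneg_left (h1.trans_eq h2) h.le
      _ = ∑ s', M.bprSO b a s' o * QF (unit s') a' := by
          rw [Finset.mul_sum]
          refine Finset.sum_congr rfl fun s' _ => ?_
          unfold post
          simp only
          field_simp
  · rw [dif_neg h]
    refine le_trans ?_ (Finset.le_sup'
      (fun a' => ∑ s', M.bprSO b a s' o * QF (unit s') a')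
      (Finset.mem_univ (Classical.arbitrary A)))
    simp [M.bprSO_eq_zero h]

end POMDP

/-- For any weight selection `W`, a bounded fixed point of the induced operator `H_ŵ`
(in particular the entropy-based tighter informed bound) is at least as tight as the fast
informed bound: `Q_E ≤ Q_F` pointwise. -/
theorem QEBIB_le_QFIB {S A O : Type*} [Fintype S] [Fintype A] [Fintype O]
    [Nonempty S] [Nonempty A] [Nonempty O] (M : POMDP S A O) (b₀ : Belief S)
    (W : ∀ (b : Belief S) (a : A) (o : O), 0 < M.bprO b a o → (M.OSIdx → ℝ))
    (hW : ∀ b a o (h : 0 < M.bprO b a o), M.IsWeight b₀ (M.post b a o h) (W b a o h))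
    (QE QF : Belief S → A → ℝ)
    (hQEbdd : ∃ C : ℝ, ∀ b a, |QE b a| ≤ C) (hQFbdd : ∃ C : ℝ, ∀ b a, |QF b a| ≤ C)
    (hQE : ∀ b a, QE b a = M.Hsel b₀ W QE b a) (hQF : ∀ b a, QF b a = M.HFIB QF b a)
    (b : Belief S) (a : A) :
    QE b a ≤ QF b a := by
  obtain ⟨CE, hCE⟩ := hQEbdd
  obtain ⟨CF, hCF⟩ := hQFbdd
  set Dset : Set ℝ := Set.range (fun p : Belief S × A => QE p.1 p.2 - QF p.1 p.2) with hDset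
  have hne : Dset.Nonempty := ⟨QE b a - QF b a, ⟨(b, a), rfl⟩⟩
  have hbdd : BddAbove Dset := by
    refine ⟨CE + CF, ?_⟩
    rintro x ⟨p, rfl⟩
    have h1 := (abs_le.1 (hCE p.1 p.2)).2
    have h2 := (abs_le.1 (hCF p.1 p.2)).1
    simp only
    linarith
  set D := sSup Dset with hD
  have hle : ∀ b a, QE b a - QF b a ≤ D := fun b a => le_csSup hbdd ⟨(b, a), rfl⟩
  have hcontract : ∀ b a, QE b a - QF b a ≤ M.γ * D := by
    intro b a
    have h1 : QE b a - QF b a ≤ M.Hsel b₀ W QE b a - M.Hsel b₀ W QF b a := by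
      rw [hQE b a]
      linarith [M.Hsel_QF_le b₀ W hW QF hQF b a]
    refine h1.trans ?_
    unfold POMDP.Hsel
    have key : ∀ o, ((if h : 0 < M.bprO b a o then
        Finset.univ.sup' Finset.univ_nonempty (fun a' =>
          M.bprO b a o * ∑ i, W b a o h i * QE (M.member b₀ i) a')
      else 0) - (if h : 0 < M.bprO b a o then
        Finset.univ.sup' Finset.univ_nonempty (fun a' =>
          M.bprO b a o * ∑ i, W b a o h i * QF (M.member b₀ i) a')
      else 0)) ≤ M.bprO b a o * D := by
      intro o
      by_cases h : 0 < M.bprO b a o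
      · rw [dif_pos h, dif_pos h]
        rw [sub_le_iff_le_add]
        refine Finset.sup'_le _ _ fun a' _ => ?_
        have hg : M.bprO b a o * ∑ i, W b a o h i * QF (M.member b₀ i) a'
            ≤ Finset.univ.sup' Finset.univ_nonempty (fun a' =>
              M.bprO b a o * ∑ i, W b a o h i * QF (M.member b₀ i) a') :=
          Finset.le_sup' (fun a' => M.bprO b a o * ∑ i, W b a o h i * QF (M.member b₀ i) a')
            (Finset.mem_univ a')
        have hdiff : M.bprO b a o * ∑ i, W b a o h i * QE (M.member b₀ i) a'
            - M.bprO b a o * ∑ i, W b a o h i * QF (M.member b₀ i) a'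
            ≤ M.bprO b a o * D := by
          rw [← mul_sub]
          refine mul_le_mul_of_nonneg_left ?_ h.le
          rw [← Finset.sum_sub_distrib]
          calc ∑ i, (W b a o h i * QE (M.member b₀ i) a' - W b a o h i * QF (M.member b₀ i) a')
              ≤ ∑ i, W b a o h i * D := by
                refine Finset.sum_le_sum fun i _ => ?_
                rw [← mul_sub]
                exact mul_le_mul_of_nonneg_left (hle _ a') ((hW b a o h).1 i)
            _ = D := by rw [← Finset.sum_mul, M.weight_sum_one (hW b a o h), one_mul]
        linarith
      · rw [dif_neg h, dif_neg h]
        push_neg at h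
        have h0 : M.bprO b a o = 0 :=
          le_antisymm h (Finset.sum_nonneg fun s' _ => M.bprSO_nonneg b a s' o)
        rw [h0]
        simp
    have hsum : (∑ o, if h : 0 < M.bprO b a o then
        Finset.univ.sup' Finset.univ_nonempty (fun a' =>
          M.bprO b a o * ∑ i, W b a o h i * QE (M.member b₀ i) a')
      else 0) - (∑ o, if h : 0 < M.bprO b a o then
        Finset.univ.sup' Finset.univ_nonempty (fun a' =>
          M.bprO b a o * ∑ i, W b a o h i * QF (M.member b₀ i) a')
      else 0) ≤ D := by
      rw [← Finset.sum_sub_distrib]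
      calc _ ≤ ∑ o, M.bprO b a o * D := Finset.sum_le_sum fun o _ => key o
        _ = D := by rw [← Finset.sum_mul, M.sum_bprO, one_mul]
    have := mul_le_mul_of_nonneg_left hsum M.γ_pos.le
    linarith
  have hDγ : D ≤ M.γ * D := by
    refine csSup_le hne ?_
    rintro x ⟨p, rfl⟩
    exact hcontract p.1 p.2
  have hD0 : D ≤ 0 := by nlinarith [M.γ_lt_one, M.γ_pos]
  linarith [hle b a]
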